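/- arXiv:2507.22631 — 6 statements merged into one kernel-verified Lean document; each statement's English description precedes it below -/
import Mathlib

section
/- Let C be a multiset over G of cardinality a·b, where a, b ≥ 1 are integers. Then the decompositions of C as a product of two multisets, (A, B) with |A| = a, |B| = b and A·B = C, fall into at most (ab)!/(a!·b!) classes under the equivalence relation (A, B) ≈ (A', B') iff A ~ A' and B ~ B'. Precisely: there exists a set S of such pairs with |S| ≤ (ab)!/(a!·b!) such that every pair (A, B) of multisets over G with |A| = a, |B| = b and A·B = C satisfies A ~ A' and B ~ B' for some (A', B') ∈ S. -/
/-- The multiset of pairwise products of elements of `A` and `B`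
(counted with multiplicity), so that `Multiset.card (mulComb A B) =
Multiset.card A * Multiset.card B`. -/
def mulComb {G : Type*} [CommGroup G] (A B : Multiset G) : Multiset G :=
  A.bind fun x => B.map fun y => x * y

/-- Two multisets over `G` are equivalent if one is obtained from the other by
rescaling every element by a fixed `ξ ∈ G`. -/
def MulEquivMultiset {G : Type*} [CommGroup G] (A A' : Multiset G) : Prop :=
  ∃ ξ : G, A.map (fun x => ξ * x) = A'

theorem perm_exists_equiv {α : Type*} {l₁ l₂ : List α} (h : l₁.Perm l₂) :
    ∃ e : Fin l₁.length ≃ Fin l₂.length, ∀ i, l₂.get (e i) = l₁.get i := by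
  induction h with
  | nil => exact ⟨Equiv.refl _, fun i => i.elim0⟩
  | cons a h ih =>
      obtain ⟨e, he⟩ := ih
      refine ⟨(finSuccEquiv _).trans ((Equiv.optionCongr e).trans (finSuccEquiv _).symm), ?_⟩
      intro i
      refine Fin.cases ?_ (fun j => ?_) i
      · simp
      · simpa using he j
  | swap a b l =>
      refine ⟨Equiv.swap ⟨0, by simp⟩ ⟨1, by simp⟩, fun i => ?_⟩
      rcases i with ⟨iv, hi⟩
      match iv with
      | 0 => simp [Equiv.swap_apply_def, Fin.ext_iff]
      | 1 => simp [Equiv.swap_apply_def, Fin.ext_iff]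
      | (k+2) => simp [Equiv.swap_apply_def, Fin.ext_iff]
  | trans h₁ h₂ ih₁ ih₂ =>
      obtain ⟨e₁, he₁⟩ := ih₁
      obtain ⟨e₂, he₂⟩ := ih₂
      exact ⟨e₁.trans e₂, fun i => (he₂ _).trans (he₁ i)⟩

theorem univ_val_map_eq_ofFn {α : Type*} {n : ℕ} (f : Fin n → α) :
    Multiset.map f Finset.univ.val = ↑(List.ofFn f) := by
  simp only [List.ofFn_eq_map, Fin.univ_def, Multiset.map_coe]

theorem exists_fn {α : Type*} (M : Multiset α) (n : ℕ) (h : Multiset.card M = n) :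
    ∃ f : Fin n → α, Multiset.map f Finset.univ.val = M := by
  obtain ⟨l, rfl⟩ := M.exists_rep
  rw [show Multiset.card ⟦l⟧ = l.length from rfl] at h
  subst h
  refine ⟨l.get, ?_⟩
  rw [univ_val_map_eq_ofFn, List.ofFn_get]
  rfl

theorem map_univ_comp_equiv {α ι κ : Type*} [Fintype ι] [Fintype κ] (e : κ ≃ ι) (f : ι → α) :
    Multiset.map (fun k => f (e k)) Finset.univ.val = Multiset.map f Finset.univ.val := by
  rw [← Finset.univ_map_equiv_to_embedding e, Finset.map_val, Multiset.map_map]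
  rfl

theorem mulComb_eq {G : Type*} [CommGroup G] {a b : ℕ} (u : Fin a → G) (w : Fin b → G) :
    mulComb (Multiset.map u Finset.univ.val) (Multiset.map w Finset.univ.val)
      = Multiset.map (fun p : Fin a × Fin b => u p.1 * w p.2) Finset.univ.val := by
  rw [← Finset.univ_product_univ, Finset.product_val]
  show _ = Multiset.map _ (Multiset.product _ _)
  simp only [mulComb, Multiset.product, Multiset.map_bind, Multiset.map_map,
    Multiset.bind_map, Function.comp]

section Main

variable {G : Type*} [CommGroup G] {a b : ℕ}

/-- auxiliary: the representative-pair map. -/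
def Fdef (c : Fin (a*b) → G) (z : Fin (a*b)) (g : Equiv.Perm (Fin (a*b))) :
    Multiset G × Multiset G :=
  (Finset.univ.val.map
     (fun i : Fin a =>
       c (g (finProdFinEquiv (i, (finProdFinEquiv.symm (g⁻¹ z)).2))) * (c z)⁻¹),
   Finset.univ.val.map
     (fun j : Fin b => c (g (finProdFinEquiv ((finProdFinEquiv.symm (g⁻¹ z)).1, j)))))

/-- auxiliary: the action of `Perm (Fin a) × Perm (Fin b)`. -/
def pidef (σ : Equiv.Perm (Fin a)) (τ : Equiv.Perm (Fin b)) : Equiv.Perm (Fin (a*b)) :=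
  (finProdFinEquiv.symm.trans (Equiv.prodCongr σ τ)).trans finProdFinEquiv

theorem pidef_apply (σ : Equiv.Perm (Fin a)) (τ : Equiv.Perm (Fin b)) (p : Fin a × Fin b) :
    pidef σ τ (finProdFinEquiv p) = finProdFinEquiv (σ p.1, τ p.2) := by
  simp [pidef, Prod.map]

theorem F_invariant (c : Fin (a*b) → G) (z : Fin (a*b))
    (σ : Equiv.Perm (Fin a)) (τ : Equiv.Perm (Fin b)) (g : Equiv.Perm (Fin (a*b))) :
    Fdef c z ((pidef σ τ).trans g) = Fdef c z g := by
  have h1 : finProdFinEquiv.symm (((pidef σ τ).trans g : Equiv.Perm (Fin (a*b)))⁻¹ z)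
      = (σ.symm (finProdFinEquiv.symm (g⁻¹ z)).1, τ.symm (finProdFinEquiv.symm (g⁻¹ z)).2) := by
    simp [pidef, Equiv.Perm.inv_def, Equiv.symm_trans_apply]
  unfold Fdef
  rw [h1]
  dsimp only
  refine Prod.ext ?_ ?_
  · have h2 : (fun i : Fin a =>
        c (((pidef σ τ).trans g) (finProdFinEquiv (i, τ.symm (finProdFinEquiv.symm (g⁻¹ z)).2)))
          * (c z)⁻¹)
        = (fun i : Fin a =>
            (fun i' : Fin a =>
              c (g (finProdFinEquiv (i', (finProdFinEquiv.symm (g⁻¹ z)).2))) * (c z)⁻¹) (σ i)) := by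
      funext i
      simp [pidef]
    rw [h2]
    exact map_univ_comp_equiv (σ : Fin a ≃ Fin a)
      (fun i' : Fin a => c (g (finProdFinEquiv (i', (finProdFinEquiv.symm (g⁻¹ z)).2))) * (c z)⁻¹)
  · have h2 : (fun j : Fin b =>
        c (((pidef σ τ).trans g) (finProdFinEquiv (σ.symm (finProdFinEquiv.symm (g⁻¹ z)).1, j))))
        = (fun j : Fin b =>
            (fun j' : Fin b =>
              c (g (finProdFinEquiv ((finProdFinEquiv.symm (g⁻¹ z)).1, j')))) (τ j)) := by
      funext j
      simp [pidef]
    rw [h2]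
    exact map_univ_comp_equiv (τ : Fin b ≃ Fin b)
      (fun j' : Fin b => c (g (finProdFinEquiv ((finProdFinEquiv.symm (g⁻¹ z)).1, j'))))

end Main

theorem grp_aux {G : Type*} [CommGroup G] (x y v : G) : x⁻¹ * y = y * v * (x * v)⁻¹ := by
  rw [mul_inv_rev, mul_assoc, ← mul_assoc v, mul_inv_cancel, one_mul, mul_comm]

/-- Let `C` be a multiset over `G` of cardinality `a * b`, where
`a, b ≥ 1`. Then the decompositions `C = A·B` with `|A| = a`, `|B| = b` fall into
at most `(ab)!/(a!·b!)` equivalence classes: there is a set `S` of such pairs of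
cardinality at most `(ab)!/(a!·b!)` such that every such pair `(A, B)` is
componentwise equivalent to some member of `S`. -/
theorem stmt1 {G : Type*} [CommGroup G] (a b : ℕ) (ha : 1 ≤ a) (hb : 1 ≤ b)
    (C : Multiset G) (hC : Multiset.card C = a * b) :
    ∃ S : Finset (Multiset G × Multiset G),
      S.card ≤ (a * b).factorial / (a.factorial * b.factorial) ∧
      ∀ A B : Multiset G, Multiset.card A = a → Multiset.card B = b →
        mulComb A B = C →
        ∃ p ∈ S, MulEquivMultiset A p.1 ∧ MulEquivMultiset B p.2 := by
  classical
  have hab : 0 < a * b := Nat.mul_pos ha hb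
  obtain ⟨c, hc⟩ := exists_fn C (a*b) hC
  set z : Fin (a*b) := ⟨0, hab⟩ with hz
  refine ⟨Finset.image (Fdef c z) Finset.univ, ?_, ?_⟩
  · set S := Finset.image (Fdef c z) Finset.univ with hS
    set gsel : Multiset G × Multiset G → Equiv.Perm (Fin (a*b)) := fun s =>
      if h : ∃ g : Equiv.Perm (Fin (a*b)), Fdef c z g = s then h.choose else 1 with hgsel
    have hsel : ∀ s ∈ S, Fdef c z (gsel s) = s := by
      intro s hs
      obtain ⟨g, -, rfl⟩ := Finset.mem_image.mp hs
      have hex : ∃ g' : Equiv.Perm (Fin (a*b)), Fdef c z g' = Fdef c z g := ⟨g, rfl⟩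
      simp only [hgsel, dif_pos hex]
      exact hex.choose_spec
    set φ : (Multiset G × Multiset G) × (Equiv.Perm (Fin a) × Equiv.Perm (Fin b))
        → Equiv.Perm (Fin (a*b)) :=
      fun x => (pidef x.2.1 x.2.2).trans (gsel x.1) with hφ
    have hinj : Set.InjOn φ
        ↑(S ×ˢ (Finset.univ : Finset (Equiv.Perm (Fin a) × Equiv.Perm (Fin b)))) := by
      intro x hx y hy hxy
      have hx1 : x.1 ∈ S := (Finset.mem_product.mp (Finset.mem_coe.mp hx)).1
      have hy1 : y.1 ∈ S := (Finset.mem_product.mp (Finset.mem_coe.mp hy)).1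
      have e1 : Fdef c z (φ x) = x.1 := by
        rw [hφ]; dsimp only; rw [F_invariant]; exact hsel _ hx1
      have e2 : Fdef c z (φ y) = y.1 := by
        rw [hφ]; dsimp only; rw [F_invariant]; exact hsel _ hy1
      have h11 : x.1 = y.1 := by rw [← e1, hxy, e2]
      have h3 : (pidef x.2.1 x.2.2).trans (gsel x.1) = (pidef y.2.1 y.2.2).trans (gsel x.1) := by
        have h3' := hxy
        rw [hφ] at h3'
        dsimp only at h3'
        rw [← h11] at h3'
        exact h3'
      have h4 : pidef x.2.1 x.2.2 = pidef y.2.1 y.2.2 := by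
        ext k
        have h5 := congrArg (fun (e : Equiv.Perm (Fin (a*b))) => e k) h3
        dsimp only [Equiv.trans_apply] at h5
        exact congrArg Fin.val ((gsel x.1).injective h5)
      have hστ : ∀ (i : Fin a) (j : Fin b), (x.2.1 i, x.2.2 j) = (y.2.1 i, y.2.2 j) := by
        intro i j
        have h6 := congrArg (fun (e : Equiv.Perm (Fin (a*b))) => e (finProdFinEquiv (i, j))) h4
        rw [pidef_apply, pidef_apply] at h6
        exact finProdFinEquiv.injective h6
      have hσ : x.2.1 = y.2.1 := by
        ext i
        exact congrArg Fin.val (congrArg Prod.fst (hστ i ⟨0, hb⟩))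
      have hτ : x.2.2 = y.2.2 := by
        ext j
        exact congrArg Fin.val (congrArg Prod.snd (hστ ⟨0, ha⟩ j))
      exact Prod.ext h11 (Prod.ext hσ hτ)
    have hcard := Finset.card_le_card_of_injOn φ (fun _ _ => Finset.mem_univ _) hinj
    rw [Finset.card_product] at hcard
    simp only [Finset.card_univ, Fintype.card_prod, Fintype.card_perm, Fintype.card_fin] at hcard
    rw [Nat.le_div_iff_mul_le (Nat.mul_pos (Nat.factorial_pos a) (Nat.factorial_pos b))]
    exact hcard
  · intro A B hA hB hAB
    obtain ⟨u, hu⟩ := exists_fn A a hA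
    obtain ⟨w, hw⟩ := exists_fn B b hB
    have hprod : Multiset.map (fun p : Fin a × Fin b => u p.1 * w p.2) Finset.univ.val = C := by
      rw [← mulComb_eq, hu, hw]; exact hAB
    have h2 := map_univ_comp_equiv (finProdFinEquiv.symm : Fin (a*b) ≃ Fin a × Fin b)
      (fun p : Fin a × Fin b => u p.1 * w p.2)
    rw [hprod, ← hc] at h2
    rw [univ_val_map_eq_ofFn, univ_val_map_eq_ofFn] at h2
    have hperm := Multiset.coe_eq_coe.mp h2
    obtain ⟨e, he⟩ := perm_exists_equiv hperm
    set σ : Equiv.Perm (Fin (a*b)) :=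
      ((finCongr (List.length_ofFn (f := _)).symm).trans e).trans (finCongr (List.length_ofFn (f := c)))
      with hσdef
    have hσ : ∀ k : Fin (a*b),
        c (σ k) = u (finProdFinEquiv.symm k).1 * w (finProdFinEquiv.symm k).2 := by
      intro k
      have h5 := he (finCongr (List.length_ofFn (f := _)).symm k)
      rw [List.get_ofFn, List.get_ofFn] at h5
      have hl : Fin.cast (List.length_ofFn (f := c)) (e (finCongr (List.length_ofFn (f := _)).symm k)) = σ k := by
        rw [hσdef]; exact Fin.ext rfl
      have hr : (Fin.cast (List.length_ofFn (f :=
            (fun k : Fin (a*b) => u (finProdFinEquiv.symm k).1 * w (finProdFinEquiv.symm k).2)))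
          ((finCongr (List.length_ofFn (f :=
            (fun k : Fin (a*b) => u (finProdFinEquiv.symm k).1 * w (finProdFinEquiv.symm k).2))).symm)
            k)) = k := Fin.ext rfl
      rw [hl, hr] at h5
      exact h5
    refine ⟨Fdef c z σ, Finset.mem_image.mpr ⟨σ, Finset.mem_univ _, rfl⟩, ?_, ?_⟩
    · set p0 := finProdFinEquiv.symm (σ⁻¹ z) with hp0
      have hcz : c z = u p0.1 * w p0.2 := by
        have h7 := hσ (σ⁻¹ z)
        rwa [show σ (σ⁻¹ z) = z from Equiv.apply_symm_apply σ z] at h7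
      refine ⟨(u p0.1)⁻¹, ?_⟩
      rw [← hu, Multiset.map_map]
      show _ = (Fdef c z σ).1
      unfold Fdef
      dsimp only
      refine congrArg (fun fn => Multiset.map fn Finset.univ.val) (funext fun i => ?_)
      rw [hσ, hcz]
      simp only [Equiv.symm_apply_apply]
      exact grp_aux _ _ _
    · set p0 := finProdFinEquiv.symm (σ⁻¹ z) with hp0
      refine ⟨u p0.1, ?_⟩
      rw [← hw, Multiset.map_map]
      show _ = (Fdef c z σ).2
      unfold Fdef
      dsimp only
      refine congrArg (fun fn => Multiset.map fn Finset.univ.val) (funext fun j => ?_)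
      rw [hσ]
      simp only [Equiv.symm_apply_apply, Function.comp]
      rfl
end

section
/- Let C be a nonempty finite multiset over G. Then there exist only finitely many inequivalent decompositions of C as a product C = A₁·…·A_k with k ≥ 1 and each multiset A_i of cardinality |A_i| > 1. Precisely: there exists a finite set S of finite lists of multisets over G such that for every k ≥ 1 and every tuple (A₁,…,A_k) of multisets over G with each |A_i| > 1 and A₁·…·A_k = C, there is a tuple (B₁,…,B_k) ∈ S and a permutation τ of {1,…,k} with A_{τ(i)} ~ B_i for every i. (Two decompositions (A₁,…,A_k), (B₁,…,B_l) are called equivalent iff k = l and, after a permutation of indices, A_i ~ B_i for every i.) -/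
/-- The product `A₁·…·A_k` of a list of multisets over `G`. -/
def prodComb {G : Type*} [CommGroup G] (L : List (Multiset G)) : Multiset G :=
  L.foldr mulComb {1}

section Aux

variable {G : Type*} [CommGroup G]

lemma mem_mulComb {A B : Multiset G} {x : G} :
    x ∈ mulComb A B ↔ ∃ a ∈ A, ∃ b ∈ B, a * b = x := by
  simp [mulComb]

lemma card_mulComb (A B : Multiset G) :
    Multiset.card (mulComb A B) = Multiset.card A * Multiset.card B := by
  simp [mulComb]

lemma card_prodComb (L : List (Multiset G)) :
    Multiset.card (prodComb L) = (L.map Multiset.card).prod := by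
  induction L with
  | nil => simp [prodComb]
  | cons A T ih => simp [prodComb, card_mulComb] at ih ⊢; simp [ih]

lemma prodComb_ne_zero {L : List (Multiset G)} (h : ∀ B ∈ L, B ≠ 0) :
    prodComb L ≠ 0 := by
  intro h0
  have hpos : 0 < (L.map Multiset.card).prod := by
    apply List.prod_pos
    intro a ha
    rw [List.mem_map] at ha
    obtain ⟨A, hA, rfl⟩ := ha
    exact Multiset.card_pos.mpr (h A hA)
  have hc := card_prodComb L
  rw [h0] at hc
  simp only [Multiset.card_zero] at hc
  omega

lemma exists_shift {L : List (Multiset G)} (h : ∀ B ∈ L, B ≠ 0)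
    {A : Multiset G} (hA : A ∈ L) : ∃ t : G, ∀ a ∈ A, a * t ∈ prodComb L := by
  induction L with
  | nil => simp at hA
  | cons B T ih =>
    have hT : ∀ B' ∈ T, B' ≠ 0 := fun B' hB' => h B' (List.mem_cons_of_mem _ hB')
    rcases List.mem_cons.mp hA with rfl | hA'
    · obtain ⟨t, ht⟩ := Multiset.exists_mem_of_ne_zero (prodComb_ne_zero hT)
      exact ⟨t, fun a ha => mem_mulComb.mpr ⟨a, ha, t, ht, rfl⟩⟩
    · obtain ⟨t, ht⟩ := ih hT hA'
      obtain ⟨b, hb⟩ := Multiset.exists_mem_of_ne_zero (h B List.mem_cons_self)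
      refine ⟨b * t, fun a ha => mem_mulComb.mpr ⟨b, hb, a * t, ht a ha, ?_⟩⟩
      simp [mul_comm, mul_left_comm, mul_assoc]

lemma length_le_prod {l : List ℕ} (h : ∀ a ∈ l, 2 ≤ a) : l.length ≤ l.prod := by
  induction l with
  | nil => simp
  | cons a T ih =>
    have hT := ih (fun x hx => h x (List.mem_cons_of_mem _ hx))
    have h1 : 0 < T.prod := by
      apply List.prod_pos
      intro x hx
      have := h x (List.mem_cons_of_mem _ hx); omega
    have ha := h a List.mem_cons_self
    have key : 2 * T.prod ≤ a * T.prod := Nat.mul_le_mul_right _ ha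
    have : (a :: T).prod = a * T.prod := by simp
    have : (a :: T).length = T.length + 1 := by simp
    simp only [List.length_cons, List.prod_cons]
    calc T.length + 1 ≤ T.prod + 1 := by omega
      _ ≤ 2 * T.prod := by omega
      _ ≤ a * T.prod := key

open Classical in
noncomputable def pick (A : Multiset G) : G :=
  if h : A = 0 then 1 else (Multiset.exists_mem_of_ne_zero h).choose

lemma pick_mem {A : Multiset G} (h : A ≠ 0) : pick A ∈ A := by
  rw [pick, dif_neg h]
  exact (Multiset.exists_mem_of_ne_zero h).choose_spec

end Aux

/-- Let `C` be a nonempty finite multiset over `G`. There are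
only finitely many inequivalent decompositions `C = A₁·…·A_k` with each
`|Aᵢ| > 1`: there is a finite set `S` of lists of multisets over `G` such that
every list `L = (A₁,…,A_k)` of multisets with each `|Aᵢ| > 1` and product `C` has
a permutation `L'` which is termwise equivalent to some member of `S` (of the
same length `k`). -/
theorem stmt2 {G : Type*} [CommGroup G] (C : Multiset G) (hC : C ≠ 0) :
    ∃ S : Finset (List (Multiset G)),
      ∀ L : List (Multiset G), L ≠ [] →
        (∀ A ∈ L, 1 < Multiset.card A) →
        prodComb L = C →
        ∃ M ∈ S, ∃ L' : List (Multiset G), L.Perm L' ∧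
          List.Forall₂ MulEquivMultiset L' M := by
  classical
  set n := Multiset.card C with hn
  set q : Multiset G := C.bind (fun c => C.map (fun c' => c * c'⁻¹)) with hq
  set T : Finset (Multiset G) := ((n • q).powerset).toFinset with hT
  have hfin : {l : List (Multiset G) | l.length ≤ n ∧ ∀ B ∈ l, B ∈ T}.Finite := by
    have h1 : {l : List (↥(T : Set (Multiset G))) | l.length ≤ n}.Finite :=
      List.finite_length_le _ n
    have h2 := h1.image (List.map (fun x : ↥(T : Set (Multiset G)) => (x : Multiset G)))
    apply h2.subset
    rintro l ⟨hlen, hmem⟩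
    refine ⟨l.pmap (fun B hB => (⟨B, hB⟩ : ↥(T : Set (Multiset G)))) hmem, by simpa, ?_⟩
    simp [List.map_pmap]
  refine ⟨hfin.toFinset, ?_⟩
  intro L hL hcard hprod
  have hne : ∀ B ∈ L, B ≠ 0 := fun B hB => by
    have := hcard B hB; intro h0; rw [h0] at this; simp at this
  set f : Multiset G → Multiset G := fun A => A.map (fun a => (pick A)⁻¹ * a) with hf
  refine ⟨L.map f, ?_, L, List.Perm.refl _, ?_⟩
  · rw [Set.Finite.mem_toFinset]
    have hprodcard : (L.map Multiset.card).prod = n := by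
      rw [← card_prodComb, hprod]
    constructor
    · have := length_le_prod (l := L.map Multiset.card) (by
        intro a ha
        rw [List.mem_map] at ha
        obtain ⟨A, hA, rfl⟩ := ha
        exact hcard A hA)
      rw [hprodcard] at this
      simpa using this
    · intro B hB
      rw [List.mem_map] at hB
      obtain ⟨A, hA, rfl⟩ := hB
      obtain ⟨t, ht⟩ := exists_shift hne hA
      rw [hprod] at ht
      have hpm : pick A ∈ A := pick_mem (hne A hA)
      -- every element of f A is in q
      have hmemq : ∀ x ∈ f A, x ∈ q := by
        intro x hx
        rw [hf] at hx
        simp only [Multiset.mem_map] at hx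
        obtain ⟨a, ha, rfl⟩ := hx
        rw [hq]
        rw [Multiset.mem_bind]
        refine ⟨a * t, ht a ha, ?_⟩
        rw [Multiset.mem_map]
        refine ⟨pick A * t, ht _ hpm, ?_⟩
        rw [mul_inv, mul_comm ((pick A)⁻¹) (t⁻¹), ← mul_assoc, mul_assoc a t t⁻¹,
          mul_inv_cancel, mul_one, mul_comm]
      have hcardfA : Multiset.card (f A) ≤ n := by
        rw [hf]
        simp only [Multiset.card_map]
        have : Multiset.card A ≤ (L.map Multiset.card).prod := by
          apply List.single_le_prod
          · intro a ha
            rw [List.mem_map] at ha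
            obtain ⟨A', hA', rfl⟩ := ha
            exact le_of_lt (hcard A' hA')
          · exact List.mem_map_of_mem hA
        omega
      rw [hT, Multiset.mem_toFinset, Multiset.mem_powerset, Multiset.le_iff_count]
      intro x
      by_cases hx : x ∈ f A
      · have h1 : Multiset.count x (f A) ≤ Multiset.card (f A) :=
          Multiset.count_le_card _ _
        have h2 : 1 ≤ Multiset.count x q := Multiset.one_le_count_iff_mem.mpr (hmemq x hx)
        rw [Multiset.count_nsmul]
        calc Multiset.count x (f A) ≤ n := le_trans h1 hcardfA
          _ = n * 1 := (mul_one n).symm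
          _ ≤ n * Multiset.count x q := Nat.mul_le_mul_left _ h2
      · rw [Multiset.count_eq_zero_of_notMem hx]
        exact Nat.zero_le _
  · rw [List.forall₂_map_right_iff]
    rw [List.forall₂_same]
    intro A hA
    exact ⟨(pick A)⁻¹, rfl⟩
end

section
/- Let q be a prime power, let k ≥ 1 be an integer, and let A₁,…,A_k be nonempty finite multisets of elements of ℚ̄ with n_i = |A_i|. Let w, w₁,…,w_k be integers. Suppose that every pairwise product α₁·α₂·⋯·α_k with α_i ∈ A_i (i.e. every element of the product multiset A₁·…·A_k) is a q-Weil number of weight w, and that for each i the full product ∏_{α ∈ A_i} α (with multiplicity) is a q-Weil number of weight w_i. Then for every i and every α ∈ A_i, the power α^{n_i} is a q-Weil number of weight w_i. -/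
open scoped BigOperators

/-- `α` is a `q`-Weil number of weight `w`: for every embedding
`ι : ℚ̄ → ℂ` we have `|ι α|² = q ^ w`. -/
def IsWeilNumber (q : ℕ) (w : ℤ) (α : AlgebraicClosure ℚ) : Prop :=
  ∀ ι : AlgebraicClosure ℚ →+* ℂ, ‖ι α‖ ^ 2 = (q : ℝ) ^ w

/-- Let `q` be a prime power, `k ≥ 1`, and `A₁,…,A_k` nonempty
finite multisets of algebraic numbers with `nᵢ = |Aᵢ|`. Let `w, w₁,…,w_k` be
integers. If every pairwise product `α₁⋯α_k` with `αᵢ ∈ Aᵢ` is a `q`-Weil number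
of weight `w`, and for each `i` the full product `∏_{α ∈ Aᵢ} α` (with
multiplicity) is a `q`-Weil number of weight `wᵢ`, then for every `i` and every
`α ∈ Aᵢ`, the power `α ^ nᵢ` is a `q`-Weil number of weight `wᵢ`. -/
theorem stmt3 (q : ℕ) (hq : ∃ p m : ℕ, p.Prime ∧ 1 ≤ m ∧ q = p ^ m)
    (k : ℕ) (hk : 1 ≤ k)
    (A : Fin k → Multiset (AlgebraicClosure ℚ))
    (hA : ∀ i, A i ≠ 0)
    (w : ℤ) (wi : Fin k → ℤ)
    (hprod : ∀ α : Fin k → AlgebraicClosure ℚ, (∀ i, α i ∈ A i) →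
      IsWeilNumber q w (∏ i, α i))
    (hfull : ∀ i, IsWeilNumber q (wi i) (A i).prod) :
    ∀ i, ∀ α ∈ A i, IsWeilNumber q (wi i) (α ^ Multiset.card (A i)) := by
  have hqpos : (0:ℝ) < (q : ℝ) := by
    obtain ⟨p, m, hp, hm, rfl⟩ := hq
    have := hp.pos
    positivity
  have hqw : (0:ℝ) < (q:ℝ) ^ w := zpow_pos hqpos w
  intro i α hα ι
  have hβ : ∀ j, ∃ b, b ∈ A j := fun j => Multiset.exists_mem_of_ne_zero (hA j)
  choose β hβ using hβ
  set C : ℝ := ∏ j ∈ Finset.univ.erase i, ‖ι (β j)‖ with hC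
  have key : ∀ γ ∈ A i, ‖ι γ‖ ^ 2 * C ^ 2 = ((q:ℝ)) ^ w := by
    intro γ hγ
    have h := hprod (fun j => if j = i then γ else β j) (fun j => by
      by_cases h : j = i
      · simp [h, hγ]
      · simp [h, hβ])
    have h2 := h ι
    have hsplit : (∏ j, (if j = i then γ else β j))
        = γ * ∏ j ∈ Finset.univ.erase i, β j := by
      rw [← Finset.mul_prod_erase Finset.univ _ (Finset.mem_univ i)]
      simp only [if_pos rfl]
      congr 1
      exact Finset.prod_congr rfl (fun j hj => by
        rw [if_neg (Finset.ne_of_mem_erase hj)])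
    rw [hsplit, map_mul, norm_mul, map_prod, norm_prod, mul_pow] at h2
    exact h2
  have habs : ∀ γ ∈ A i, ‖ι γ‖ = ‖ι α‖ := by
    intro γ hγ
    have h1 := key γ hγ
    have h2 := key α hα
    have hC2 : C ^ 2 ≠ 0 := by
      intro h
      rw [h, mul_zero] at h1
      exact hqw.ne' h1.symm
    have : ‖ι γ‖ ^ 2 = ‖ι α‖ ^ 2 := by
      have := h1.trans h2.symm
      exact mul_right_cancel₀ hC2 this
    have h3 := norm_nonneg (ι γ)
    have h4 := norm_nonneg (ι α)
    nlinarith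
  have hprodA : ‖ι (A i).prod‖
      = ‖ι α‖ ^ Multiset.card (A i) := by
    rw [map_multiset_prod, show ‖((A i).map ι).prod‖ = (((A i).map ι).map (fun x : ℂ => ‖x‖)).prod from
      map_multiset_prod (normHom : ℂ →*₀ ℝ) _]
    rw [Multiset.map_map]
    have h6 := Multiset.eq_replicate_of_mem (s := (A i).map ((fun x : ℂ => ‖x‖) ∘ ⇑ι))
      (a := ‖ι α‖) (fun x hx => by
        obtain ⟨γ, hγ, rfl⟩ := Multiset.mem_map.mp hx
        exact habs γ hγ)
    rw [h6, Multiset.prod_replicate, Multiset.card_map]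
  have h5 := hfull i ι
  rw [hprodA] at h5
  rw [map_pow, norm_pow]
  exact h5
end

section
/- Let a be an integer with 1 ≤ a ≤ n, fix a subset J ⊆ {1,…,n+1} with |J| = a, and set v = Σ_{j∈J} e_j. Consider the finite nonempty set of real numbers { ⟪Σ_{i∈I} e_i, v⟫ : I ⊆ {1,…,n+1}, |I| = a, I ≠ J }. Its maximum equals ‖v‖² − 1 and its minimum equals ‖v‖² − min(a, n+1−a). -/
open scoped BigOperators RealInnerProductSpace

/-- The weights of the standard representation of `sl_{n+1}`: `e i` is the `i`-th
standard basis vector of `ℝ^{n+1}` minus the mean vector, so its `i`-th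
coordinate is `1 - 1/(n+1)` and its other coordinates are `-1/(n+1)`. -/
noncomputable def stdWeight (n : ℕ) (i : Fin (n + 1)) :
    EuclideanSpace ℝ (Fin (n + 1)) :=
  WithLp.toLp 2 (fun j => (if j = i then (1 : ℝ) else 0) - 1 / (n + 1))

lemma sum_stdWeight_apply (n : ℕ) (I : Finset (Fin (n+1))) (j : Fin (n+1)) :
    (∑ i ∈ I, stdWeight n i) j = (if j ∈ I then 1 else 0) - I.card / (n+1) := by
  classical
  rw [show (∑ i ∈ I, stdWeight n i) j = ∑ i ∈ I, stdWeight n i j from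
    by rw [WithLp.ofLp_sum, Finset.sum_apply]]
  simp only [stdWeight, PiLp.toLp_apply, Finset.sum_sub_distrib,
    Finset.sum_ite_eq, Finset.sum_const, nsmul_eq_mul, mul_one_div]

lemma inner_sum_sum (n : ℕ) (I J : Finset (Fin (n+1))) :
    ⟪∑ i ∈ I, stdWeight n i, ∑ j ∈ J, stdWeight n j⟫ =
      ((I ∩ J).card : ℝ) - I.card * J.card / (n+1) := by
  classical
  rw [PiLp.inner_apply]
  simp only [RCLike.inner_apply, conj_trivial, sum_stdWeight_apply]
  have expand : ∀ j : Fin (n+1),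
      ((if j ∈ I then (1:ℝ) else 0) - I.card/(n+1)) *
        ((if j ∈ J then 1 else 0) - J.card/(n+1)) =
      (if j ∈ I ∩ J then 1 else 0)
        - ((J.card:ℝ)/(n+1)) * (if j ∈ I then 1 else 0)
        - ((I.card:ℝ)/(n+1)) * (if j ∈ J then 1 else 0)
        + ((I.card:ℝ)/(n+1)) * (J.card/(n+1)) := by
    intro j
    by_cases h : j ∈ I <;> by_cases h' : j ∈ J <;>
      simp [h, h', Finset.mem_inter] <;> ring
  rw [Finset.sum_congr rfl (fun j _ => (mul_comm _ _).trans (expand j))]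
  have hne : ((n:ℝ)+1) ≠ 0 := by positivity
  simp only [Finset.sum_add_distrib, Finset.sum_sub_distrib, ← Finset.mul_sum,
    Finset.sum_boole, Finset.sum_const, Finset.card_univ, Fintype.card_fin,
    nsmul_eq_mul]
  have : (Finset.univ.filter (· ∈ I)).card = I.card := by
    congr 1; ext x; simp
  have h2 : (Finset.univ.filter (· ∈ J)).card = J.card := by
    congr 1; ext x; simp
  have h3 : (Finset.univ.filter (· ∈ I ∩ J)).card = (I ∩ J).card := by
    congr 1; ext x; simp
  rw [this, h2, h3]
  field_simp
  push_cast
  ring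

lemma norm_sq_sum (n : ℕ) (J : Finset (Fin (n+1))) :
    ‖∑ j ∈ J, stdWeight n j‖ ^ 2 = (J.card : ℝ) - J.card * J.card / (n+1) := by
  rw [← real_inner_self_eq_norm_sq, inner_sum_sum, Finset.inter_self]

/-- Fix `1 ≤ a ≤ n` and `J ⊆ {1,…,n+1}` with `|J| = a`, and set
`v = ∑_{j ∈ J} e j`. The set `{⟪∑_{i ∈ I} e i, v⟫ : |I| = a, I ≠ J}` has maximum
`‖v‖² − 1` and minimum `‖v‖² − min(a, n+1−a)`. -/
theorem stmt6 (n : ℕ) (hn : 1 ≤ n) (a : ℕ) (ha : 1 ≤ a) (han : a ≤ n)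
    (J : Finset (Fin (n + 1))) (hJ : J.card = a) :
    IsGreatest
      {x : ℝ | ∃ I : Finset (Fin (n + 1)), I.card = a ∧ I ≠ J ∧
        x = ⟪∑ i ∈ I, stdWeight n i, ∑ j ∈ J, stdWeight n j⟫}
      (‖∑ j ∈ J, stdWeight n j‖ ^ 2 - 1) ∧
    IsLeast
      {x : ℝ | ∃ I : Finset (Fin (n + 1)), I.card = a ∧ I ≠ J ∧
        x = ⟪∑ i ∈ I, stdWeight n i, ∑ j ∈ J, stdWeight n j⟫}
      (‖∑ j ∈ J, stdWeight n j‖ ^ 2 -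
        min (a : ℝ) ((n : ℝ) + 1 - (a : ℝ))) := by
  classical
  have hval : ∀ I : Finset (Fin (n+1)), I.card = a →
      ⟪∑ i ∈ I, stdWeight n i, ∑ j ∈ J, stdWeight n j⟫ =
        ‖∑ j ∈ J, stdWeight n j‖ ^ 2 - ((a : ℝ) - ((I ∩ J).card : ℝ)) := by
    intro I hI
    rw [inner_sum_sum, norm_sq_sum, hI, hJ]
    ring
  -- cardinality bounds for any valid I
  have hcard_lt : ∀ I : Finset (Fin (n+1)), I.card = a → I ≠ J →
      (I ∩ J).card < a := by
    intro I hI hIJ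
    rcases lt_or_eq_of_le (le_trans (Finset.card_le_card
      (Finset.inter_subset_left (s₂ := J))) hI.le) with h | h
    · exact h
    · exfalso
      have h1 : I ∩ J = I :=
        Finset.eq_of_subset_of_card_le Finset.inter_subset_left (by omega)
      have h2 : I ⊆ J := h1 ▸ Finset.inter_subset_right
      exact hIJ (Finset.eq_of_subset_of_card_le h2 (by omega))
  have hcard_ge : ∀ I : Finset (Fin (n+1)), I.card = a →
      a + a ≤ (I ∩ J).card + (n + 1) := by
    intro I hI
    have := Finset.card_inter_add_card_union I J
    have hu : (I ∪ J).card ≤ n + 1 := by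
      simpa using Finset.card_le_card (Finset.subset_univ (I ∪ J))
    omega
  -- complement facts
  have hJc : Jᶜ.card = n + 1 - a := by
    rw [Finset.card_compl, hJ]; simp
  constructor
  · constructor
    · -- membership for max: swap one element
      obtain ⟨j0, hj0⟩ := Finset.card_pos.mp (by omega : 0 < J.card)
      obtain ⟨i0, hi0⟩ := Finset.card_pos.mp (by rw [hJc]; omega : 0 < Jᶜ.card)
      rw [Finset.mem_compl] at hi0
      refine ⟨insert i0 (J.erase j0), ?_, ?_, ?_⟩
      · rw [Finset.card_insert_of_notMem (fun h => hi0 (Finset.mem_of_mem_erase h)),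
          Finset.card_erase_of_mem hj0, hJ]
        omega
      · intro h
        exact hi0 (h ▸ Finset.mem_insert_self i0 _)
      · have hint : (insert i0 (J.erase j0)) ∩ J = J.erase j0 := by
          ext x
          simp only [Finset.mem_inter, Finset.mem_insert, Finset.mem_erase]
          constructor
          · rintro ⟨h1 | h1, h2⟩
            · exact absurd (h1 ▸ h2) hi0
            · exact h1
          · rintro ⟨h1, h2⟩; exact ⟨Or.inr ⟨h1, h2⟩, h2⟩
        rw [hval _ (by
          rw [Finset.card_insert_of_notMem (fun h => hi0 (Finset.mem_of_mem_erase h)),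
            Finset.card_erase_of_mem hj0, hJ]; omega), hint,
          Finset.card_erase_of_mem hj0, hJ]
        have : ((a - 1 : ℕ) : ℝ) = (a : ℝ) - 1 := by
          push_cast [ha]; ring
        rw [this]; ring
    · -- upper bound
      rintro x ⟨I, hI, hIJ, rfl⟩
      rw [hval I hI]
      have h3 : ((I ∩ J).card : ℝ) + 1 ≤ (a : ℝ) := by
        exact_mod_cast hcard_lt I hI hIJ
      linarith
  · constructor
    · -- membership for min
      by_cases hc : a ≤ n + 1 - a
      · -- take I disjoint from J
        obtain ⟨I, hIsub, hI⟩ := Finset.exists_subset_card_eq (by omega : a ≤ Jᶜ.card)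
        have hint : I ∩ J = ∅ := by
          rw [Finset.eq_empty_iff_forall_notMem]
          intro x hx
          rw [Finset.mem_inter] at hx
          exact (Finset.mem_compl.mp (hIsub hx.1)) hx.2
        refine ⟨I, hI, ?_, ?_⟩
        · intro h
          rw [h, Finset.inter_self] at hint
          rw [hint] at hJ
          simp at hJ
          omega
        · rw [hval I hI, hint]
          have hc' : (a : ℝ) + a ≤ (n : ℝ) + 1 := by
            exact_mod_cast (by omega : a + a ≤ n + 1)
          have hmin : min (a : ℝ) ((n : ℝ) + 1 - a) = a := by
            rw [min_eq_left]; linarith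
          rw [hmin]; simp
      · -- take I ⊇ Jᶜ plus part of J
        obtain ⟨S, hSsub, hS⟩ := Finset.exists_subset_card_eq
          (by omega : 2 * a - (n + 1) ≤ J.card)
        set I := Jᶜ ∪ S with hIdef
        have hdisj : Disjoint Jᶜ S := by
          rw [Finset.disjoint_left]
          intro x hx hxS
          exact (Finset.mem_compl.mp hx) (hSsub hxS)
        have hI : I.card = a := by
          rw [hIdef, Finset.card_union_of_disjoint hdisj, hJc, hS]; omega
        have hint : I ∩ J = S := by
          ext x
          simp only [hIdef, Finset.mem_inter, Finset.mem_union, Finset.mem_compl]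
          constructor
          · rintro ⟨h1 | h1, h2⟩
            · exact absurd h2 h1
            · exact h1
          · exact fun hx => ⟨Or.inr hx, hSsub hx⟩
        refine ⟨I, hI, ?_, ?_⟩
        · intro h
          rw [h, Finset.inter_self] at hint
          rw [← hint, hJ] at hS
          omega
        · rw [hval I hI, hint, hS]
          have hc' : (n : ℝ) + 1 ≤ (a : ℝ) + a := by
            exact_mod_cast (by omega : n + 1 ≤ a + a)
          have hmin : min (a : ℝ) ((n : ℝ) + 1 - a) = (n : ℝ) + 1 - a := by
            rw [min_eq_right]; linarith
          rw [hmin]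
          have : ((2 * a - (n + 1) : ℕ) : ℝ) = 2 * (a : ℝ) - ((n : ℝ) + 1) := by
            rw [Nat.cast_sub (by omega : n + 1 ≤ 2 * a)]; push_cast; ring
          rw [this]; ring
    · -- lower bound
      rintro x ⟨I, hI, hIJ, rfl⟩
      rw [hval I hI]
      have h1 : (0 : ℝ) ≤ ((I ∩ J).card : ℝ) := by positivity
      have h2' : ((a : ℝ) + a) ≤ ((I ∩ J).card : ℝ) + ((n : ℝ) + 1) := by
        exact_mod_cast hcard_ge I hI
      have h4 : (a : ℝ) - ((I ∩ J).card : ℝ) ≤ min (a : ℝ) ((n : ℝ) + 1 - a) :=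
        le_min (by linarith) (by linarith)
      linarith
end

section
/- Let W ⊆ P be a finite subset that is invariant under the action of G and spans P as a real vector space. Then |W| ≥ r + 1. Moreover, if |W| = r + 1 then k = 1. -/
open scoped BigOperators

/-- The real vector space `P = V₁ × ⋯ × V_k`, where
`Vᵢ = {x ∈ ℝ^{nᵢ+1} : ∑ⱼ xⱼ = 0}`, realized as a submodule of
`∏ᵢ ℝ^{nᵢ+1}`.  It models the real weight space of the semisimple Lie algebra
`sl_{n₁+1} × ⋯ × sl_{n_k+1}`. -/
def zeroSumSubmodule (k : ℕ) (n : Fin k → ℕ) :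
    Submodule ℝ (∀ i : Fin k, Fin (n i + 1) → ℝ) where
  carrier := {x | ∀ i, ∑ j, x i j = 0}
  add_mem' := by
    intro x y hx hy i
    simp only [Pi.add_apply, Finset.sum_add_distrib, hx i, hy i, add_zero]
  zero_mem' := by
    intro i
    simp
  smul_mem' := by
    intro c x hx i
    simp only [Pi.smul_apply, smul_eq_mul, ← Finset.mul_sum, hx i, mul_zero]


lemma le_choose_aux : ∀ N m : ℕ, 1 ≤ m → m < N → N ≤ N.choose m := by
  intro N
  induction N with
  | zero => intro m h1 h2; omega
  | succ N ih =>
    intro m h1 h2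
    rcases Nat.eq_or_lt_of_le h1 with h | h
    · simp [← h]
    · obtain ⟨l, rfl⟩ : ∃ l, m = l + 1 := ⟨m - 1, by omega⟩
      rw [Nat.choose_succ_succ]
      have hb : 1 ≤ N.choose l.succ := Nat.choose_pos (by omega)
      have ha : N ≤ N.choose l := ih l (by omega) (by omega)
      omega

lemma exists_perm_finset {α : Type*} [Fintype α] [DecidableEq α] {T F : Finset α}
    (h : T.card = F.card) : ∃ σ : Equiv.Perm α, ∀ x, σ x ∈ F ↔ x ∈ T := by
  classical
  have hc : Tᶜ.card = Fᶜ.card := by simp [Finset.card_compl, h]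
  let e1 : {x // x ∈ T} ≃ {x // x ∈ F} := Finset.equivOfCardEq h
  let e2 : {x // ¬ x ∈ T} ≃ {x // ¬ x ∈ F} :=
    (Equiv.subtypeEquivRight (fun x => (Finset.mem_compl (s := T)).symm)).trans
      ((Finset.equivOfCardEq hc).trans
        (Equiv.subtypeEquivRight (fun x => (Finset.mem_compl (s := F)))))
  refine ⟨(Equiv.sumCompl (· ∈ T)).symm.trans ((e1.sumCongr e2).trans
    (Equiv.sumCompl (· ∈ F))), ?_⟩
  intro x
  by_cases hx : x ∈ T
  · simp [Equiv.sumCompl_symm_apply_of_pos hx, hx, Finset.coe_mem]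
  · have := (e2 ⟨x, hx⟩).2
    simp [Equiv.sumCompl_symm_apply_of_neg hx, hx, this]

lemma orbit_card_ge {N : ℕ} (v : Fin (N + 1) → ℝ) {a b : Fin (N + 1)} (hab : v a ≠ v b) :
    N + 1 ≤ (Finset.image (fun σ : Equiv.Perm (Fin (N + 1)) => v ∘ σ) Finset.univ).card := by
  classical
  set F : Finset (Fin (N + 1)) := Finset.univ.filter (fun j => v j = v a) with hF
  have hFa : a ∈ F := by simp [hF]
  have hFb : b ∉ F := by simp [hF]; exact fun h => hab h.symm
  have hF1 : 1 ≤ F.card := Finset.card_pos.mpr ⟨a, hFa⟩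
  have hFn : F.card < N + 1 := by
    have : F ⊂ Finset.univ := ⟨Finset.subset_univ F, fun h => hFb (h (Finset.mem_univ b))⟩
    simpa using Finset.card_lt_card this
  set P : Finset (Finset (Fin (N + 1))) := Finset.powersetCard F.card Finset.univ with hP
  have hPcard : P.card = (N + 1).choose F.card := by
    simp [hP, Finset.card_powersetCard]
  -- map each T ∈ P to an orbit element
  set f : Finset (Fin (N + 1)) → (Fin (N + 1) → ℝ) := fun T =>
    if h : T.card = F.card then v ∘ ⇑(Classical.choose (exists_perm_finset h)) else 0 with hf
  have key : ∀ T, T.card = F.card → ∀ x, f T x = v a ↔ x ∈ T := by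
    intro T hT x
    have hspec := Classical.choose_spec (exists_perm_finset hT)
    have h1 : f T x = v (Classical.choose (exists_perm_finset hT) x) := by
      simp [hf, hT]
    have h2 : (Classical.choose (exists_perm_finset hT) x ∈ F) ↔
        v (Classical.choose (exists_perm_finset hT) x) = v a := by simp [hF]
    rw [h1]
    exact h2.symm.trans (hspec x)
  have hmaps : ∀ T ∈ P, f T ∈
      Finset.image (fun σ : Equiv.Perm (Fin (N + 1)) => v ∘ σ) Finset.univ := by
    intro T hT
    have hc : T.card = F.card := (Finset.mem_powersetCard.mp hT).2
    refine Finset.mem_image.mpr ⟨Classical.choose (exists_perm_finset hc), Finset.mem_univ _, ?_⟩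
    simp [hf, hc]
  have hinj : Set.InjOn f P := by
    intro T hT T' hT' heq
    have hc : T.card = F.card := (Finset.mem_powersetCard.mp hT).2
    have hc' : T'.card = F.card := (Finset.mem_powersetCard.mp hT').2
    ext x
    rw [← key T hc x, ← key T' hc' x, heq]
  calc N + 1 ≤ (N + 1).choose F.card := le_choose_aux _ _ hF1 hFn
    _ = P.card := hPcard.symm
    _ ≤ _ := Finset.card_le_card_of_injOn f hmaps hinj


lemma one_add_sum_le_prod {ι : Type*} (S : Finset ι) (f : ι → ℕ) :
    1 + ∑ i ∈ S, f i ≤ ∏ i ∈ S, (f i + 1) := by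
  classical
  induction S using Finset.cons_induction with
  | empty => simp
  | cons a S ha ih =>
    rw [Finset.sum_cons, Finset.prod_cons]
    have h2 : (f a + 1) * (1 + ∑ i ∈ S, f i) ≤ (f a + 1) * ∏ i ∈ S, (f i + 1) :=
      Nat.mul_le_mul_left _ ih
    have h3 : (f a + 1) * (1 + ∑ i ∈ S, f i)
        = 1 + (f a + ∑ i ∈ S, f i) + f a * ∑ i ∈ S, f i := by ring
    linarith [Nat.zero_le (f a * ∑ i ∈ S, f i)]

lemma two_add_sum_le_prod {ι : Type*} [DecidableEq ι] (S : Finset ι) (f : ι → ℕ)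
    (hf : ∀ i, 1 ≤ f i) {a b : ι} (ha : a ∈ S) (hb : b ∈ S) (hab : a ≠ b) :
    2 + ∑ i ∈ S, f i ≤ ∏ i ∈ S, (f i + 1) := by
  classical
  rw [← Finset.mul_prod_erase S _ ha, ← Finset.add_sum_erase S _ ha]
  have h1 := one_add_sum_le_prod (S.erase a) f
  have h3 : (f a + 1) * (1 + ∑ i ∈ S.erase a, f i) ≤ (f a + 1) * ∏ i ∈ S.erase a, (f i + 1) :=
    Nat.mul_le_mul_left _ h1
  have h2 : f b ≤ ∑ i ∈ S.erase a, f i :=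
    Finset.single_le_sum (fun i _ => Nat.zero_le _) (Finset.mem_erase.mpr ⟨hab.symm, hb⟩)
  have hfa := hf a
  have hfb := hf b
  have h4 : (f a + 1) * (1 + ∑ i ∈ S.erase a, f i)
      = 1 + (f a + ∑ i ∈ S.erase a, f i) + f a * ∑ i ∈ S.erase a, f i := by ring
  have h5 : 1 ≤ f a * ∑ i ∈ S.erase a, f i :=
    Nat.one_le_iff_ne_zero.mpr (Nat.mul_ne_zero (by omega) (by omega))
  linarith

lemma sum_biUnion_le_sum {ι : Type*} [DecidableEq ι] (A : Finset (Finset ι)) (f : ι → ℕ) :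
    ∑ i ∈ A.biUnion id, f i ≤ ∑ S ∈ A, ∑ i ∈ S, f i := by
  classical
  induction A using Finset.induction_on with
  | empty => simp
  | insert S A hS ih =>
    rw [Finset.biUnion_insert, Finset.sum_insert hS]
    calc ∑ i ∈ (id S ∪ A.biUnion id), f i
        ≤ ∑ i ∈ id S, f i + ∑ i ∈ A.biUnion id, f i := by
          have := Finset.sum_union_inter (s₁ := id S) (s₂ := A.biUnion id) (f := f)
          omega
      _ ≤ ∑ i ∈ S, f i + ∑ S ∈ A, ∑ i ∈ S, f i := Nat.add_le_add_left ih _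

lemma sum_cover_le {ι : Type*} [DecidableEq ι] (A : Finset (Finset ι)) (f : ι → ℕ)
    (u : Finset ι) (h : ∀ i ∈ u, ∃ S ∈ A, i ∈ S) :
    ∑ i ∈ u, f i ≤ ∑ S ∈ A, ∑ i ∈ S, f i := by
  classical
  have h1 : u ⊆ A.biUnion id := by
    intro i hi
    obtain ⟨S, hS, hiS⟩ := h i hi
    exact Finset.mem_biUnion.mpr ⟨S, hS, hiS⟩
  exact (Finset.sum_le_sum_of_subset h1).trans (sum_biUnion_le_sum A f)

/-- Fix `k ≥ 1`, integers `n₁,…,n_k ≥ 1` and `r = n₁ + ⋯ + n_k`.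
Let the product of symmetric groups `S_{n₁+1} × ⋯ × S_{n_k+1}` act on
`P = V₁ × ⋯ × V_k` by permuting coordinates within each factor.  If `W ⊆ P` is a
finite subset invariant under this action which spans `P` over `ℝ`, then
`|W| ≥ r + 1`, and if `|W| = r + 1` then `k = 1`. -/
theorem stmt9 (k : ℕ) (hk : 1 ≤ k) (n : Fin k → ℕ) (hn : ∀ i, 1 ≤ n i)
    (W : Finset (∀ i : Fin k, Fin (n i + 1) → ℝ))
    (hWP : ∀ w ∈ W, w ∈ zeroSumSubmodule k n)
    (hWinv : ∀ w ∈ W, ∀ σ : ∀ i : Fin k, Equiv.Perm (Fin (n i + 1)),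
      (fun i j => w i (σ i j)) ∈ W)
    (hWspan : Submodule.span ℝ (W : Set (∀ i : Fin k, Fin (n i + 1) → ℝ)) =
      zeroSumSubmodule k n) :
    (∑ i, n i) + 1 ≤ W.card ∧ (W.card = (∑ i, n i) + 1 → k = 1) := by
  classical
  set supp : (∀ i : Fin k, Fin (n i + 1) → ℝ) → Finset (Fin k) :=
    fun w => Finset.univ.filter (fun i => w i ≠ 0) with hsupp
  -- covering: every factor is in the support of some element of W
  have hcov : ∀ i : Fin k, ∃ w ∈ W, w i ≠ 0 := by
    intro i
    by_contra hcon
    push_neg at hcon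
    -- the element of the zero-sum space with nonzero i-component
    set x : ∀ i : Fin k, Fin (n i + 1) → ℝ := fun i' j => (if i' = i ∧ (j : ℕ) = 0 then (1 : ℝ) else 0)
      - (if i' = i ∧ (j : ℕ) = 1 then 1 else 0) with hx
    have hxQ : x ∈ zeroSumSubmodule k n := by
      intro i'
      rw [Finset.sum_sub_distrib]
      by_cases hii : i' = i
      · subst hii
        rw [Finset.sum_eq_single (⟨0, by omega⟩ : Fin (n i' + 1))
            (fun b _ hb => by
              simp only [hx]
              have : (b : ℕ) ≠ 0 := fun h => hb (Fin.ext h)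
              simp [this])
            (fun h => absurd (Finset.mem_univ _) h),
          Finset.sum_eq_single (⟨1, by have := hn i'; omega⟩ : Fin (n i' + 1))
            (fun b _ hb => by
              simp only [hx]
              have : (b : ℕ) ≠ 1 := fun h => hb (Fin.ext h)
              simp [this])
            (fun h => absurd (Finset.mem_univ _) h)]
        simp [hx]
      · simp [hx, hii]
    rw [← hWspan] at hxQ
    have hker : Submodule.span ℝ (W : Set (∀ i : Fin k, Fin (n i + 1) → ℝ)) ≤
        LinearMap.ker (LinearMap.proj (R := ℝ) (φ := fun i => Fin (n i + 1) → ℝ) i) := by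
      rw [Submodule.span_le]
      intro w hw
      simpa using hcon w hw
    have hxi : x i = 0 := by
      have := hker hxQ
      simpa using this
    have : x i ⟨0, by omega⟩ = 0 := by rw [hxi]; rfl
    rw [hx] at this
    norm_num at this
  -- fiber bound via orbits
  have hfib : ∀ S ∈ W.image supp,
      (∏ i ∈ S, (n i + 1)) ≤ (W.filter (fun w => supp w = S)).card := by
    intro S hS
    obtain ⟨w, hwW, hwS⟩ := Finset.mem_image.mp hS
    set O : ∀ i : Fin k, Finset (Fin (n i + 1) → ℝ) := fun i =>
      Finset.image (fun σ : Equiv.Perm (Fin (n i + 1)) => w i ∘ ⇑σ) Finset.univ with hO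
    have hOsub : Fintype.piFinset O ⊆ W.filter (fun x => supp x = S) := by
      intro x hxmem
      rw [Fintype.mem_piFinset] at hxmem
      have hch : ∀ i, ∃ σ : Equiv.Perm (Fin (n i + 1)), w i ∘ ⇑σ = x i := by
        intro i
        obtain ⟨σ, _, hσ⟩ := Finset.mem_image.mp (hxmem i)
        exact ⟨σ, hσ⟩
      choose σ hσ using hch
      have hxeq : x = fun i j => w i (σ i j) := by
        funext i j
        rw [← hσ i]; rfl
      have hxz : ∀ i, x i = 0 ↔ w i = 0 := by
        intro i
        rw [← hσ i]
        constructor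
        · intro h
          funext j
          have := congrFun h ((σ i).symm j)
          simpa using this
        · intro h
          rw [h]
          rfl
      rw [Finset.mem_filter]
      refine ⟨by rw [hxeq]; exact hWinv w hwW σ, ?_⟩
      rw [← hwS]
      ext i
      simp only [hsupp, Finset.mem_filter, Finset.mem_univ, true_and]
      exact not_congr (hxz i)
    have hcard1 : (Fintype.piFinset O).card ≤ (W.filter (fun x => supp x = S)).card :=
      Finset.card_le_card hOsub
    rw [Fintype.card_piFinset] at hcard1
    have hprod : (∏ i ∈ S, (n i + 1)) ≤ ∏ i : Fin k, (O i).card := by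
      have h1 : ∏ i ∈ S, (n i + 1)
          = ∏ i : Fin k, (if i ∈ S then n i + 1 else 1) := by
        rw [Finset.prod_ite_mem, Finset.univ_inter]
      rw [h1]
      apply Finset.prod_le_prod'
      intro i _
      by_cases hiS : i ∈ S
      · simp only [hiS, if_true]
        have hwi : w i ≠ 0 := by
          have : i ∈ supp w := hwS ▸ hiS
          simpa [hsupp] using this
        obtain ⟨a, ha⟩ : ∃ a, w i a ≠ 0 := by
          by_contra hc
          push_neg at hc
          exact hwi (funext hc)
        obtain ⟨b, hb⟩ : ∃ b, w i b ≠ w i a := by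
          by_contra hc
          push_neg at hc
          have hsum := hWP w hwW i
          rw [Finset.sum_congr rfl (fun j _ => hc j), Finset.sum_const] at hsum
          simp only [Finset.card_univ, Fintype.card_fin, nsmul_eq_mul] at hsum
          have hne : ((n i : ℝ) + 1) ≠ 0 := by positivity
          exact ha ((mul_eq_zero.mp hsum).resolve_left (by push_cast; exact hne))
        exact orbit_card_ge (w i) (fun h => hb h.symm)
      · simp only [hiS, if_false]
        rw [Nat.one_le_iff_ne_zero, ← Nat.pos_iff_ne_zero, Finset.card_pos]
        exact ⟨w i ∘ ⇑(1 : Equiv.Perm (Fin (n i + 1))),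
          Finset.mem_image.mpr ⟨1, Finset.mem_univ _, rfl⟩⟩
    exact hprod.trans hcard1
  -- main counting inequality
  have hWcard : (W.image supp).card + ∑ i, n i ≤ W.card := by
    rw [Finset.card_eq_sum_card_fiberwise
      (fun x hx => Finset.mem_image_of_mem supp hx)]
    have h1 : ∀ S ∈ W.image supp,
        1 + ∑ i ∈ S, n i ≤ (W.filter (fun w => supp w = S)).card :=
      fun S hS => (one_add_sum_le_prod S n).trans (hfib S hS)
    calc (W.image supp).card + ∑ i, n i
        ≤ (W.image supp).card + ∑ S ∈ W.image supp, ∑ i ∈ S, n i := by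
          have := sum_cover_le (W.image supp) n Finset.univ (by
            intro i _
            obtain ⟨w, hwW, hwi⟩ := hcov i
            exact ⟨supp w, Finset.mem_image_of_mem supp hwW, by simp [hsupp, hwi]⟩)
          omega
      _ = ∑ S ∈ W.image supp, (1 + ∑ i ∈ S, n i) := by
          rw [Finset.sum_add_distrib]
          simp
      _ ≤ _ := Finset.sum_le_sum h1
  have himg : 1 ≤ (W.image supp).card := by
    obtain ⟨w, hwW, _⟩ := hcov ⟨0, by omega⟩
    exact Finset.card_pos.mpr ⟨supp w, Finset.mem_image_of_mem supp hwW⟩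
  constructor
  · omega
  · intro hWr
    by_contra hk1
    have hk2 : 2 ≤ k := by omega
    have himg1 : (W.image supp).card = 1 := by omega
    obtain ⟨S₀, hS₀⟩ := Finset.card_eq_one.mp himg1
    have hallS : ∀ i, i ∈ S₀ := by
      intro i
      obtain ⟨w, hwW, hwi⟩ := hcov i
      have : supp w ∈ W.image supp := Finset.mem_image_of_mem supp hwW
      rw [hS₀, Finset.mem_singleton] at this
      rw [← this]
      simp [hsupp, hwi]
    have hS₀univ : S₀ = Finset.univ := Finset.eq_univ_iff_forall.mpr hallS
    have hi12 : (⟨0, by omega⟩ : Fin k) ≠ ⟨1, by omega⟩ := by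
      simp [Fin.ext_iff]
    have hbig : 2 + ∑ i, n i ≤ W.card := by
      calc 2 + ∑ i, n i = 2 + ∑ i ∈ S₀, n i := by rw [hS₀univ]
        _ ≤ ∏ i ∈ S₀, (n i + 1) :=
            two_add_sum_le_prod S₀ n hn (hallS _) (hallS _) hi12
        _ ≤ (W.filter (fun w => supp w = S₀)).card :=
            hfib S₀ (hS₀ ▸ Finset.mem_singleton_self S₀)
        _ ≤ W.card := Finset.card_le_card (Finset.filter_subset _ _)
    omega
end

section
/- Let k ≥ 1 and let h₁,…,h_k be finite-dimensional semisimple Lie algebras over K; set h = h₁ × ⋯ × h_k (the product Lie algebra). Let f ⊆ h be a Lie subalgebra that is itself a semisimple Lie algebra and such that for every 1 ≤ i ≤ k the induced projection map f → h_i is surjective. If rank f = rank h, then f = h. -/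
open DirectSum

/-- A finite product (= direct sum) of finite-dimensional Lie algebras is a
finite module. -/
instance directSum_module_finite (K : Type*) [Field K] {k : ℕ}
    (H : Fin k → Type*) [∀ i, LieRing (H i)] [∀ i, LieAlgebra K (H i)]
    [∀ i, Module.Finite K (H i)] : Module.Finite K (⨁ i, H i) :=
  Module.Finite.equiv (DirectSum.linearEquivFunOnFintype K (Fin k) H).symm

/-- A Lie subalgebra of a finite-dimensional Lie algebra is finite-dimensional. -/
instance lieSubalgebra_module_finite (K : Type*) [Field K] {L : Type*}
    [LieRing L] [LieAlgebra K L] [Module.Finite K L] (f : LieSubalgebra K L) :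
    Module.Finite K f :=
  FiniteDimensional.finiteDimensional_submodule f.toSubmodule

section Aux

open Module LinearMap Polynomial

/-- Characteristic polynomial of a "diagonal" endomorphism of a finite product
is the product of the characteristic polynomials. -/
lemma stmt10_charpoly_pi {K : Type*} [Field K] : ∀ {k : ℕ} (M : Fin k → Type*)
    [∀ i, AddCommGroup (M i)] [∀ i, Module K (M i)] [∀ i, Module.Finite K (M i)]
    (φ : ∀ i, Module.End K (M i)),
    (LinearMap.pi (fun i => (φ i) ∘ₗ LinearMap.proj i) : Module.End K (∀ i, M i)).charpoly
      = ∏ i, (φ i).charpoly := by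
  intro k
  induction k with
  | zero =>
    intro M _ _ _ φ
    rw [Finset.univ_eq_empty, Finset.prod_empty]
    have h0 : finrank K (∀ i, M i) = 0 := Module.finrank_zero_of_subsingleton
    have hm := LinearMap.charpoly_monic
      (LinearMap.pi (fun i => (φ i) ∘ₗ LinearMap.proj i) : Module.End K (∀ i, M i))
    rw [← hm.natDegree_eq_zero, LinearMap.charpoly_natDegree, h0]
  | succ n ih =>
    intro M _ _ _ φ
    let e : (∀ i : Fin (n+1), M i) ≃ₗ[K] (M 0) × (∀ i : Fin n, M i.succ) :=
    { toFun := fun f => (f 0, fun i => f i.succ)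
      map_add' := fun f g => rfl
      map_smul' := fun c f => rfl
      invFun := fun p => Fin.cons p.1 p.2
      left_inv := fun f => funext fun i => Fin.cases rfl (fun j => rfl) i
      right_inv := fun p => rfl }
    have key : (LinearMap.pi (fun i => (φ i) ∘ₗ LinearMap.proj i) : Module.End K (∀ i, M i))
        = e.symm.conj ((φ 0).prodMap
            (LinearMap.pi (fun i : Fin n => (φ i.succ) ∘ₗ LinearMap.proj i))) := by
      apply LinearMap.ext
      intro z
      funext i
      induction i using Fin.cases with
      | zero => rfl
      | succ j => rfl
    rw [key, LinearEquiv.charpoly_conj, LinearMap.charpoly_prodMap, ih,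
      Fin.prod_univ_succ]

variable {K : Type*} [Field K] {k : ℕ} {H : Fin k → Type*}
  [∀ i, LieRing (H i)] [∀ i, LieAlgebra K (H i)] [∀ i, Module.Finite K (H i)]

lemma stmt10_charpoly_ad_directSum (y : ⨁ i, H i) :
    (LieAlgebra.ad K (⨁ i, H i) y).charpoly
      = ∏ i, (LieAlgebra.ad K (H i) (y i)).charpoly := by
  let d := DirectSum.linearEquivFunOnFintype K (Fin k) H
  have key : d.conj (LieAlgebra.ad K (⨁ i, H i) y)
      = LinearMap.pi (fun i => (LieAlgebra.ad K (H i) (y i)) ∘ₗ LinearMap.proj i) := by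
    apply LinearMap.ext
    intro z
    funext i
    have h1 : ∀ (w : ⨁ i, H i), d w i = w i := fun w => rfl
    simp only [LinearEquiv.conj_apply, LinearMap.comp_apply, LinearEquiv.coe_coe]
    rw [h1]
    simp only [LinearMap.pi_apply, LinearMap.comp_apply, LinearMap.proj_apply,
      LieAlgebra.ad_apply, DirectSum.bracket_apply]
    have h2 : (d.symm z) i = z i := congrFun (d.apply_symm_apply z) i
    rw [h2]
  rw [← LinearEquiv.charpoly_conj d, key, stmt10_charpoly_pi]

lemma stmt10_natTrailingDegree_finset_prod {ι : Type*} (s : Finset ι) (p : ι → Polynomial K)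
    (h : ∀ i ∈ s, p i ≠ 0) :
    (∏ i ∈ s, p i).natTrailingDegree = ∑ i ∈ s, (p i).natTrailingDegree := by
  classical
  induction s using Finset.cons_induction with
  | empty => simp
  | cons a s ha ih =>
    rw [Finset.prod_cons, Finset.sum_cons,
      Polynomial.natTrailingDegree_mul (h a (Finset.mem_cons_self a s))
        (Finset.prod_ne_zero_iff.mpr fun i hi => h i (Finset.mem_cons_of_mem hi)),
      ih fun i hi => h i (Finset.mem_cons_of_mem hi)]

lemma stmt10_natTrailingDegree_charpoly_ad_directSum (y : ⨁ i, H i) :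
    (LieAlgebra.ad K (⨁ i, H i) y).charpoly.natTrailingDegree
      = ∑ i, (LieAlgebra.ad K (H i) (y i)).charpoly.natTrailingDegree := by
  rw [stmt10_charpoly_ad_directSum]
  exact stmt10_natTrailingDegree_finset_prod _ _
    fun i _ => (LinearMap.charpoly_monic _).ne_zero

variable [Infinite K]

/-- Additivity of the rank of a Lie algebra over finite direct sums. -/
lemma stmt10_rank_directSum :
    LieAlgebra.rank K (⨁ i, H i) = ∑ i, LieAlgebra.rank K (H i) := by
  apply le_antisymm
  · choose u hu using fun i => LieAlgebra.exists_isRegular K (H i)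
    let y : ⨁ i, H i := (DirectSum.linearEquivFunOnFintype K (Fin k) H).symm u
    have hy : ∀ i, y i = u i := fun i =>
      congrFun ((DirectSum.linearEquivFunOnFintype K (Fin k) H).apply_symm_apply u) i
    calc LieAlgebra.rank K (⨁ i, H i)
        ≤ (LieAlgebra.ad K (⨁ i, H i) y).charpoly.natTrailingDegree :=
          LieAlgebra.rank_le_natTrailingDegree_charpoly_ad K y
      _ = ∑ i, (LieAlgebra.ad K (H i) (y i)).charpoly.natTrailingDegree :=
          stmt10_natTrailingDegree_charpoly_ad_directSum y
      _ = ∑ i, LieAlgebra.rank K (H i) := by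
          refine Finset.sum_congr rfl fun i _ => ?_
          rw [hy i]
          exact (LieAlgebra.isRegular_iff_natTrailingDegree_charpoly_eq_rank K (u i)).mp (hu i)
  · obtain ⟨y, hy⟩ := LieAlgebra.exists_isRegular K (⨁ i, H i)
    calc ∑ i, LieAlgebra.rank K (H i)
        ≤ ∑ i, (LieAlgebra.ad K (H i) (y i)).charpoly.natTrailingDegree :=
          Finset.sum_le_sum fun i _ => LieAlgebra.rank_le_natTrailingDegree_charpoly_ad K (y i)
      _ = (LieAlgebra.ad K (⨁ i, H i) y).charpoly.natTrailingDegree :=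
          (stmt10_natTrailingDegree_charpoly_ad_directSum y).symm
      _ = LieAlgebra.rank K (⨁ i, H i) :=
          (LieAlgebra.isRegular_iff_natTrailingDegree_charpoly_eq_rank K y).mp hy

open MvPolynomial in
/-- In a Lie subalgebra of a finite product that surjects onto each factor, there is an
element that is simultaneously regular in the subalgebra and whose components are all
regular in the respective factors. -/
lemma stmt10_exists_simultaneous_regular (f : LieSubalgebra K (⨁ i, H i))
    (hsurj : ∀ i : Fin k, Function.Surjective (fun x : f => ((x : ⨁ i, H i)) i)) :
    ∃ x : f, LieAlgebra.IsRegular K x ∧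
      ∀ i, LieAlgebra.IsRegular K (((x : ⨁ i, H i)) i) := by
  classical
  let b := Module.finBasis K f
  let φ₀ := (LieAlgebra.ad K f : f →ₗ[K] Module.End K f)
  let p : ∀ i, (f →ₗ[K] H i) := fun i =>
    (DirectSum.component K (Fin k) H i) ∘ₗ f.toSubmodule.subtype
  let φ : ∀ i, (f →ₗ[K] Module.End K (H i)) := fun i =>
    (LieAlgebra.ad K (H i) : H i →ₗ[K] Module.End K (H i)) ∘ₗ p i
  have hφ : ∀ i (x : f), (φ i) x = LieAlgebra.ad K (H i) ((x : ⨁ i, H i) i) := by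
    intro i x; rfl
  let Q : MvPolynomial _ K :=
    ((polyCharpoly φ₀ b).coeff (LieAlgebra.rank K f)) *
      ∏ i, ((polyCharpoly (φ i) b).coeff (LieAlgebra.rank K (H i)))
  have hQ : Q ≠ 0 := by
    apply mul_ne_zero
    · exact LieAlgebra.polyCharpoly_coeff_rank_ne_zero K f b
    · rw [Finset.prod_ne_zero_iff]
      intro i _
      obtain ⟨u, hu⟩ := LieAlgebra.exists_isRegular K (H i)
      obtain ⟨x, hx⟩ := hsurj i u
      intro hzero
      have h2 := LinearMap.polyCharpoly_coeff_eval (φ i) b x (LieAlgebra.rank K (H i))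
      rw [hzero] at h2
      simp only [map_zero] at h2
      rw [hφ i x] at h2
      simp only [hx] at h2
      exact hu h2.symm
  obtain ⟨v, hv⟩ : ∃ v, MvPolynomial.eval v Q ≠ 0 := by
    by_contra h0
    push_neg at h0
    exact hQ (MvPolynomial.funext (q := 0) (by simpa using h0))
  let x : f := b.repr.symm (Finsupp.equivFunOnFinite.symm v)
  have hrepr : ⇑(b.repr x) = v := by
    show ⇑(b.repr (b.repr.symm (Finsupp.equivFunOnFinite.symm v))) = v
    rw [LinearEquiv.apply_symm_apply]
    exact Finsupp.equivFunOnFinite.apply_symm_apply v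
  rw [show Q = _ * _ from rfl, map_mul, map_prod] at hv
  obtain ⟨hv0, hvP⟩ := mul_ne_zero_iff.mp hv
  rw [Finset.prod_ne_zero_iff] at hvP
  refine ⟨x, ?_, ?_⟩
  · rw [LieAlgebra.isRegular_def]
    have h3 := LinearMap.polyCharpoly_coeff_eval φ₀ b x (LieAlgebra.rank K f)
    rw [hrepr] at h3
    rw [show ((LieAlgebra.ad K f) x).charpoly = (φ₀ x).charpoly from rfl, ← h3]
    exact hv0
  · intro i
    rw [LieAlgebra.isRegular_def]
    have h3 := LinearMap.polyCharpoly_coeff_eval (φ i) b x (LieAlgebra.rank K (H i))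
    rw [hrepr, hφ i x] at h3
    rw [← h3]
    exact hvP i (Finset.mem_univ i)

end Aux

section Aux2

variable {K : Type*} [Field K]

/-- Lie algebra homomorphisms map Engel subalgebras into Engel subalgebras. -/
lemma stmt10_lieHom_mem_engel {L₁ L₂ : Type*} [LieRing L₁] [LieAlgebra K L₁]
    [LieRing L₂] [LieAlgebra K L₂] (g : L₁ →ₗ⁅K⁆ L₂) {x z : L₁}
    (hz : z ∈ LieSubalgebra.engel K x) : g z ∈ LieSubalgebra.engel K (g x) := by
  rw [LieSubalgebra.mem_engel_iff] at hz ⊢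
  obtain ⟨n, hn⟩ := hz
  refine ⟨n, ?_⟩
  have comm : ∀ (m : ℕ) (w : L₁),
      ((LieAlgebra.ad K L₂ (g x)) ^ m) (g w) = g (((LieAlgebra.ad K L₁ x) ^ m) w) := by
    intro m
    induction m with
    | zero => intro w; simp
    | succ m ih =>
      intro w
      have h1 : ((LieAlgebra.ad K L₂ (g x)) ^ (m+1)) (g w)
          = ((LieAlgebra.ad K L₂ (g x)) ^ m) ⁅g x, g w⁆ := by
        rw [pow_succ, Module.End.mul_apply, LieAlgebra.ad_apply]
      rw [h1, ← g.map_lie, ih, pow_succ, Module.End.mul_apply, LieAlgebra.ad_apply]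
  rw [comm n z, hn, map_zero g]

variable {k : ℕ} {H : Fin k → Type*}
  [∀ i, LieRing (H i)] [∀ i, LieAlgebra K (H i)]

lemma stmt10_lie_of (y : ⨁ i, H i) (i : Fin k) (w : H i) :
    ⁅y, DirectSum.lieAlgebraOf K (Fin k) H i w⁆
      = DirectSum.lieAlgebraOf K (Fin k) H i ⁅y i, w⁆ := by
  classical
  refine DFinsupp.ext fun j => ?_
  rw [DirectSum.bracket_apply]
  show ⁅y j, (DirectSum.of H i w) j⁆ = (DirectSum.of H i ⁅y i, w⁆) j
  rcases eq_or_ne i j with rfl | hij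
  · rw [DirectSum.of_eq_same, DirectSum.of_eq_same]
  · rw [DirectSum.of_eq_of_ne _ _ _ hij.symm, DirectSum.of_eq_of_ne _ _ _ hij.symm, lie_zero]

lemma stmt10_of_mem_engel (y : ⨁ i, H i) (i : Fin k) {w : H i}
    (hw : w ∈ LieSubalgebra.engel K (y i)) :
    DirectSum.lieAlgebraOf K (Fin k) H i w ∈ LieSubalgebra.engel K y := by
  rw [LieSubalgebra.mem_engel_iff] at hw ⊢
  obtain ⟨n, hn⟩ := hw
  refine ⟨n, ?_⟩
  have comm : ∀ (m : ℕ) (u : H i),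
      ((LieAlgebra.ad K (⨁ i, H i) y) ^ m) (DirectSum.lieAlgebraOf K (Fin k) H i u)
        = DirectSum.lieAlgebraOf K (Fin k) H i (((LieAlgebra.ad K (H i) (y i)) ^ m) u) := by
    intro m
    induction m with
    | zero => intro u; simp
    | succ m ih =>
      intro u
      have h1 : ((LieAlgebra.ad K (⨁ i, H i) y) ^ (m+1)) (DirectSum.lieAlgebraOf K (Fin k) H i u)
          = ((LieAlgebra.ad K (⨁ i, H i) y) ^ m) ⁅y, DirectSum.lieAlgebraOf K (Fin k) H i u⁆ := by
        rw [pow_succ, Module.End.mul_apply, LieAlgebra.ad_apply]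
      rw [h1, stmt10_lie_of, ih, pow_succ, Module.End.mul_apply, LieAlgebra.ad_apply]
  rw [comm n w, hn, map_zero (DirectSum.lieAlgebraOf K (Fin k) H i)]

/-- In a semisimple Lie algebra, a Lie ideal containing an Engel subalgebra is everything. -/
lemma stmt10_lieIdeal_eq_top {M : Type*} [LieRing M] [LieAlgebra K M]
    [LieAlgebra.IsSemisimple K M] (J : LieIdeal K M) (x : M)
    (hle : ∀ w ∈ LieSubalgebra.engel K x, w ∈ J) : J = ⊤ := by
  obtain ⟨J', hJ'⟩ := exists_isCompl J
  have hJ'le : ∀ y ∈ J', y ∈ LieSubalgebra.engel K x := by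
    intro y hy
    rw [← LieSubalgebra.normalizer_engel K x, LieSubalgebra.mem_normalizer_iff]
    intro w hw
    have h1 : ⁅y, w⁆ ∈ J := J.lie_mem (hle w hw)
    have h2 : ⁅y, w⁆ ∈ J' := by
      rw [← lie_skew]
      exact neg_mem (J'.lie_mem hy)
    have h3 : ⁅y, w⁆ ∈ J ⊓ J' := (LieSubmodule.mem_inf _ _ _).mpr ⟨h1, h2⟩
    rw [hJ'.inf_eq_bot, LieSubmodule.mem_bot] at h3
    rw [h3]
    exact (LieSubalgebra.engel K x).zero_mem
  have hbot : J' = ⊥ := by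
    rw [eq_bot_iff]
    intro y hy
    have h3 : y ∈ J ⊓ J' := (LieSubmodule.mem_inf _ _ _).mpr ⟨hle y (hJ'le y hy), hy⟩
    rwa [hJ'.inf_eq_bot] at h3
  have := hJ'.sup_eq_top
  rwa [hbot, sup_bot_eq] at this

end Aux2

/-- Let `K` be a field of characteristic zero, `k ≥ 1`, and
`h₁,…,h_k` finite-dimensional semisimple Lie algebras over `K`; let
`h = h₁ × ⋯ × h_k` be the product Lie algebra. If `f ⊆ h` is a Lie subalgebra
which is itself semisimple and such that each induced projection `f → hᵢ` is
surjective, and `rank f = rank h`, then `f = h`. -/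
theorem stmt10 (K : Type*) [Field K] [CharZero K] (k : ℕ) (hk : 1 ≤ k)
    (H : Fin k → Type*) [∀ i, LieRing (H i)] [∀ i, LieAlgebra K (H i)]
    [∀ i, Module.Finite K (H i)] [∀ i, LieAlgebra.IsSemisimple K (H i)]
    (f : LieSubalgebra K (⨁ i, H i))
    [LieAlgebra.IsSemisimple K f]
    (hsurj : ∀ i : Fin k, Function.Surjective
      (fun x : f => ((x : ⨁ i, H i)) i))
    (hrank : LieAlgebra.rank K f = LieAlgebra.rank K (⨁ i, H i)) :
    f = ⊤ := by
  classical
  obtain ⟨x, hxf, hxi⟩ := stmt10_exists_simultaneous_regular f hsurj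
  -- the Engel subalgebra of `↑x` in the ambient algebra has dimension `rank`
  have hE : Module.finrank K (LieSubalgebra.engel K ((x : ⨁ i, H i)))
      = LieAlgebra.rank K (⨁ i, H i) := by
    rw [LieAlgebra.finrank_engel, stmt10_natTrailingDegree_charpoly_ad_directSum,
      stmt10_rank_directSum]
    exact Finset.sum_congr rfl fun i _ =>
      (LieAlgebra.isRegular_iff_natTrailingDegree_charpoly_eq_rank K _).mp (hxi i)
  -- the Engel subalgebra of `x` in `f` maps into the ambient Engel subalgebra
  have hsub : ((LieSubalgebra.engel K x).toSubmodule.map f.toSubmodule.subtype)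
      ≤ (LieSubalgebra.engel K ((x : ⨁ i, H i))).toSubmodule := by
    rintro _ ⟨z, hz, rfl⟩
    have := stmt10_lieHom_mem_engel f.incl (x := x) (z := z) hz
    rwa [show f.incl z = f.toSubmodule.subtype z from rfl,
      show f.incl x = (x : ⨁ i, H i) from rfl] at this
  have hT : Module.finrank K
      ((LieSubalgebra.engel K x).toSubmodule.map f.toSubmodule.subtype)
      = LieAlgebra.rank K f := by
    rw [Submodule.finrank_map_subtype_eq]
    exact (LieAlgebra.isRegular_iff_finrank_engel_eq_rank K x).mp hxf
  have heq : (LieSubalgebra.engel K x).toSubmodule.map f.toSubmodule.subtype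
      = (LieSubalgebra.engel K ((x : ⨁ i, H i))).toSubmodule :=
    Submodule.eq_of_le_of_finrank_le hsub (by rw [hT, hrank, ← hE]; rfl)
  -- hence the ambient Engel subalgebra is contained in `f`
  have hEf : ∀ z ∈ LieSubalgebra.engel K ((x : ⨁ i, H i)), z ∈ f := by
    intro z hz
    have hz' : z ∈ (LieSubalgebra.engel K x).toSubmodule.map f.toSubmodule.subtype := by
      rw [heq]; exact hz
    obtain ⟨w, -, rfl⟩ := hz'
    exact w.2
  -- each factor is contained in `f`
  have hfactor : ∀ i (a : H i), DirectSum.lieAlgebraOf K (Fin k) H i a ∈ f := by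
    intro i
    let J : LieIdeal K (H i) :=
      { f.toSubmodule.comap (DirectSum.lieAlgebraOf K (Fin k) H i).toLinearMap with
        lie_mem := by
          intro c a ha
          have ha' : DirectSum.lieAlgebraOf K (Fin k) H i a ∈ f := ha
          obtain ⟨z, hz⟩ := hsurj i c
          have hz' : (z : ⨁ i, H i) i = c := hz
          have key : ⁅(z : ⨁ i, H i), DirectSum.lieAlgebraOf K (Fin k) H i a⁆
              = DirectSum.lieAlgebraOf K (Fin k) H i ⁅c, a⁆ := by
            rw [stmt10_lie_of, hz']
          have hmem : ⁅(z : ⨁ i, H i), DirectSum.lieAlgebraOf K (Fin k) H i a⁆ ∈ f :=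
            f.lie_mem z.2 ha'
          rw [key] at hmem
          exact hmem }
    have hJ : ∀ w ∈ LieSubalgebra.engel K ((x : ⨁ i, H i) i), w ∈ J := by
      intro w hw
      have h1 : DirectSum.lieAlgebraOf K (Fin k) H i w
          ∈ LieSubalgebra.engel K (x : ⨁ i, H i) := stmt10_of_mem_engel _ i hw
      exact hEf _ h1
    have htop : J = ⊤ := stmt10_lieIdeal_eq_top J ((x : ⨁ i, H i) i) hJ
    intro a
    have : a ∈ J := htop ▸ LieSubmodule.mem_top _
    exact this
  -- conclude
  apply LieSubalgebra.ext
  intro z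
  simp only [LieSubalgebra.mem_top, iff_true]
  have hz : z = ∑ i, DirectSum.of H i (z i) := (DirectSum.sum_univ_of z).symm
  rw [hz]
  exact sum_mem fun i _ => hfactor i (z i)
end
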